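/- Let S be a local operator system contained in a unital Pro-C*-algebra A, B a Pro-C*-algebra, and φ : S → B a local completely positive map with respect to the pair of indices (α, β). Then φ is local completely bounded with ‖φ(1)‖_β = ‖φ‖_{(α,β)} = ‖φ‖^{lcb}_{(α,β)}, where ‖φ‖_{(α,β)} = sup { ‖φ(a)‖_β : ‖a‖_α ≤ 1 } and ‖φ‖^{lcb}_{(α,β)} = sup_n ‖φ^{(n)}‖_{(α,β)}. -/

import Mathlib

open scoped ComplexOrder

noncomputable section

variable {V : Type} [AddCommGroup V] [Module ℂ V]

/-- Conjugation `Xᴴ A X` of a `V`-valued matrix by a scalar matrix `X`. -/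
def sconj {n m : ℕ} (X : Matrix (Fin n) (Fin m) ℂ)
    (A : Matrix (Fin n) (Fin n) V) : Matrix (Fin m) (Fin m) V :=
  Matrix.of fun i j => ∑ p, ∑ q, ((starRingEnd ℂ) (X p i) * X q j) • A p q

/-- A (not necessarily proper) cone in a complex vector space. -/
def IsVCone {M : Type} [AddCommGroup M] [Module ℂ M] (C : Set M) : Prop :=
  (0 : M) ∈ C ∧ (∀ x ∈ C, ∀ y ∈ C, x + y ∈ C) ∧
    ∀ r : ℝ, 0 ≤ r → ∀ x ∈ C, (r : ℂ) • x ∈ C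

/-- A 2×2 block matrix of `n × n` blocks, reindexed to `Fin (n+n)`. -/
def blk {n : ℕ} (A B C D : Matrix (Fin n) (Fin n) V) :
    Matrix (Fin (n + n)) (Fin (n + n)) V :=
  Matrix.reindex finSumFinEquiv finSumFinEquiv (Matrix.fromBlocks A B C D)

/-- The diagonal matrix `diag (e, …, e)`. -/
def diagE (e : V) (n : ℕ) : Matrix (Fin n) (Fin n) V :=
  Matrix.diagonal fun _ => e

variable [StarAddMonoid V] [StarModule ℂ V]

/-- The seminorm at level `(α, n)` induced by the matrix cones `C` and the unit `e`:
`‖X‖_α^n = inf { r ≥ 0 : [[r eₙ, X],[X*, r eₙ]] ∈ C_α^{2n} }`. -/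
def nrm {Γ : Type} (C : Γ → (k : ℕ) → Set (Matrix (Fin k) (Fin k) V)) (e : V)
    (α : Γ) (n : ℕ) (X : Matrix (Fin n) (Fin n) V) : ℝ :=
  sInf {r : ℝ | 0 ≤ r ∧
    blk ((r : ℂ) • diagE e n) X (star X) ((r : ℂ) • diagE e n) ∈ C α (n + n)}

/-- A local matrix *-ordering on `V`: a downward filtered family of compatible matrix
cones of hermitian matrices whose total intersection with their negatives is trivial. -/
structure LMOrder (Γ : Type) (V : Type) [AddCommGroup V] [Module ℂ V]
    [StarAddMonoid V] [StarModule ℂ V] where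
  C : Γ → (n : ℕ) → Set (Matrix (Fin n) (Fin n) V)
  cone : ∀ α n, IsVCone (C α n)
  herm : ∀ α n, ∀ A ∈ C α n, star A = A
  filtered : ∀ α β : Γ, ∃ γ, ∀ n, C γ n ⊆ C α n ∩ C β n
  proper : ∀ n (A : Matrix (Fin n) (Fin n) V), (∀ α, A ∈ C α n ∧ -A ∈ C α n) → A = 0
  compat : ∀ (α : Γ) (n m : ℕ) (X : Matrix (Fin n) (Fin m) ℂ),
    ∀ A ∈ C α n, sconj X A ∈ C α m

/-- An abstract local operator system: a local matrix *-ordering together with an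
Archimedean matrix order unit. -/
structure LocalOpSys (Γ : Type) (V : Type) [AddCommGroup V] [Module ℂ V]
    [StarAddMonoid V] [StarModule ℂ V] extends LMOrder Γ V where
  e : V
  eherm : star e = e
  unit : ∀ (α : Γ) (n : ℕ) (A : Matrix (Fin n) (Fin n) V), star A = A →
    ∃ r : ℝ, 0 < r ∧ (r : ℂ) • diagE e n - A ∈ C α n
  arch : ∀ (α : Γ) (n : ℕ) (A : Matrix (Fin n) (Fin n) V),
    (∀ r : ℝ, 0 < r → (r : ℂ) • diagE e n + A ∈ C α n) → A ∈ C α n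

/-- An Archimedean local order unit space (`A.L.O.U.` space): ground-level cones only. -/
structure ALOU (Γ : Type) (V : Type) [AddCommGroup V] [Module ℂ V]
    [StarAddMonoid V] [StarModule ℂ V] where
  pos : Γ → Set V
  cone : ∀ α, IsVCone (pos α)
  herm : ∀ α, ∀ v ∈ pos α, star v = v
  filtered : ∀ α β : Γ, ∃ γ, pos γ ⊆ pos α ∩ pos β
  proper : ∀ v : V, (∀ α, v ∈ pos α ∧ -v ∈ pos α) → v = 0
  e : V
  eherm : star e = e
  unit : ∀ (α : Γ) (v : V), star v = v → ∃ r : ℝ, 0 < r ∧ (r : ℂ) • e - v ∈ pos α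
  arch : ∀ (α : Γ) (v : V), (∀ r : ℝ, 0 < r → (r : ℂ) • e + v ∈ pos α) → v ∈ pos α

/-- The minimal matrix cones over a family of ground-level cones. -/
def Cmin {Γ : Type} (pos : Γ → Set V) (α : Γ) (n : ℕ) :
    Set (Matrix (Fin n) (Fin n) V) :=
  {A | ∀ L : Fin n → ℂ, (∑ i, ∑ j, ((starRingEnd ℂ) (L i) * L j) • A i j) ∈ pos α}

/-- The maximal matrix cones over a family of ground-level cones:
sums `Σ aᵢ ⊗ vᵢ` with `aᵢ` positive semidefinite scalar matrices and `vᵢ` positive. -/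
def Dmax {Γ : Type} (pos : Γ → Set V) (α : Γ) (n : ℕ) :
    Set (Matrix (Fin n) (Fin n) V) :=
  {A | ∃ (k : ℕ) (a : Fin k → Matrix (Fin n) (Fin n) ℂ) (v : Fin k → V),
    (∀ i, (a i).PosSemidef) ∧ (∀ i, v i ∈ pos α) ∧
    A = Matrix.of fun p q => ∑ i, (a i p q) • v i}

/-- The amplification `φ⁽ᵏ⁾` of a matrix-valued linear map, realized on the index
type `Fin k × ι`. -/
def ampP {S : Type} [AddCommGroup S] [Module ℂ S] {k : ℕ} {ι : Type} [Fintype ι]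
    (φ : S →ₗ[ℂ] Matrix ι ι ℂ) (M : Matrix (Fin k) (Fin k) S) :
    Matrix (Fin k × ι) (Fin k × ι) ℂ :=
  Matrix.of fun ip jq => φ (M ip.1 jq.1) ip.2 jq.2

end

set_option linter.unusedSectionVars false

section Aux

variable {V W : Type} [AddCommGroup V] [Module ℂ V] [StarAddMonoid V] [StarModule ℂ V]
  [AddCommGroup W] [Module ℂ W] [StarAddMonoid W] [StarModule ℂ W] {Γ : Type}

lemma blk_add {n : ℕ} (A B C D A' B' C' D' : Matrix (Fin n) (Fin n) V) :
    blk A B C D + blk A' B' C' D' = blk (A + A') (B + B') (C + C') (D + D') := by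
  simp only [blk, Matrix.reindex_apply, ← Matrix.fromBlocks_add]
  rfl

lemma blk_smul {n : ℕ} (c : ℂ) (A B C D : Matrix (Fin n) (Fin n) V) :
    c • blk A B C D = blk (c • A) (c • B) (c • C) (c • D) := by
  simp only [blk, Matrix.reindex_apply, ← Matrix.fromBlocks_smul]
  rfl

lemma blk_star {n : ℕ} (A B C D : Matrix (Fin n) (Fin n) V) :
    star (blk A B C D) = blk (star A) (star C) (star B) (star D) := by
  simp only [blk, Matrix.reindex_apply, Matrix.star_eq_conjTranspose,
    Matrix.conjTranspose_submatrix, Matrix.fromBlocks_conjTranspose]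

lemma blk_map {n : ℕ} (φ : V →ₗ[ℂ] W) (A B C D : Matrix (Fin n) (Fin n) V) :
    (blk A B C D).map ⇑φ = blk (A.map ⇑φ) (B.map ⇑φ) (C.map ⇑φ) (D.map ⇑φ) := by
  simp only [blk, Matrix.reindex_apply, ← Matrix.submatrix_map, Matrix.fromBlocks_map]

lemma blk_inj₁₂ {n : ℕ} {A B C D A' B' C' D' : Matrix (Fin n) (Fin n) V}
    (h : blk A B C D = blk A' B' C' D') : B = B' := by
  have h2 := (Matrix.reindex finSumFinEquiv finSumFinEquiv).injective h
  have := congrArg Matrix.toBlocks₁₂ h2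
  simpa [Matrix.toBlocks_fromBlocks₁₂] using this

lemma diagE_blk (e : V) (n : ℕ) :
    blk (diagE e n) 0 0 (diagE e n) = diagE e (n + n) := by
  simp only [blk, diagE, Matrix.reindex_apply, Matrix.fromBlocks_diagonal,
    Matrix.submatrix_diagonal_equiv]
  refine congrArg Matrix.diagonal ?_
  funext x
  simp only [Function.comp_apply]
  rcases h : finSumFinEquiv.symm x with a | a <;> simp [h]

lemma star_diagE {e : V} (he : star e = e) (n : ℕ) : star (diagE e n) = diagE e n := by
  simp only [diagE, Matrix.star_eq_conjTranspose, Matrix.diagonal_conjTranspose]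
  refine congrArg Matrix.diagonal ?_
  funext x
  exact he

lemma map_diagE (φ : V →ₗ[ℂ] W) (e : V) (n : ℕ) :
    (diagE e n).map ⇑φ = diagE (φ e) n := by
  simp only [diagE, Matrix.diagonal_map (map_zero φ)]

end Aux

section Aux2

variable {V : Type} [AddCommGroup V] [Module ℂ V] [StarAddMonoid V] [StarModule ℂ V] {Γ : Type}

lemma blk_apply' {n : ℕ} (A B C D : Matrix (Fin n) (Fin n) V) (x y : Fin n ⊕ Fin n) :
    blk A B C D (finSumFinEquiv x) (finSumFinEquiv y) = Matrix.fromBlocks A B C D x y := by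
  simp [blk]

lemma eInC (O : LocalOpSys Γ V) (α : Γ) (n : ℕ) : diagE O.e n ∈ O.C α n := by
  obtain ⟨r, hr, hmem⟩ := O.unit α n (-(diagE O.e n))
    (by rw [star_neg, star_diagE O.eherm])
  have h1 : (r : ℂ) • diagE O.e n - -(diagE O.e n) = ((r + 1 : ℝ) : ℂ) • diagE O.e n := by
    push_cast
    rw [sub_neg_eq_add, add_smul, one_smul]
  rw [h1] at hmem
  have h2 := (O.cone α n).2.2 (r + 1)⁻¹ (by positivity) _ hmem
  rw [smul_smul, ← Complex.ofReal_mul, inv_mul_cancel₀ (by positivity),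
    Complex.ofReal_one, one_smul] at h2
  exact h2

lemma blkdiag_mem (O : LocalOpSys Γ V) {α : Γ} {n : ℕ} {A : Matrix (Fin n) (Fin n) V}
    (hA : A ∈ O.C α n) : blk A 0 0 A ∈ O.C α (n + n) := by
  have h1 := O.compat α n (n + n)
    (Matrix.of fun p i => if finSumFinEquiv.symm i = Sum.inl p then (1 : ℂ) else 0) A hA
  have h2 := O.compat α n (n + n)
    (Matrix.of fun p i => if finSumFinEquiv.symm i = Sum.inr p then (1 : ℂ) else 0) A hA
  have h3 := (O.cone α (n + n)).2.1 _ h1 _ h2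
  have hs : blk A 0 0 A = sconj
      (Matrix.of fun p i => if finSumFinEquiv.symm i = Sum.inl p then (1 : ℂ) else 0) A +
      sconj (Matrix.of fun p i => if finSumFinEquiv.symm i = Sum.inr p then (1 : ℂ) else 0) A := by
    ext i j
    obtain ⟨x, rfl⟩ := finSumFinEquiv.surjective i
    obtain ⟨y, rfl⟩ := finSumFinEquiv.surjective j
    simp only [sconj, Matrix.of_apply, Matrix.add_apply, blk_apply', Equiv.symm_apply_apply]
    rcases x with a | a <;> rcases y with b | b <;>
      simp [Matrix.fromBlocks, apply_ite (starRingEnd ℂ), ite_smul, mul_ite, ite_mul,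
        mul_one, mul_zero, one_mul, zero_mul, zero_smul, one_smul,
        Finset.sum_ite_eq, Finset.sum_ite_eq']
  rw [hs]
  exact h3

lemma nset_nonempty (O : LocalOpSys Γ V) (α : Γ) (n : ℕ) (M : Matrix (Fin n) (Fin n) V) :
    ∃ r : ℝ, 0 ≤ r ∧
      blk ((r : ℂ) • diagE O.e n) M (star M) ((r : ℂ) • diagE O.e n) ∈ O.C α (n + n) := by
  obtain ⟨r, hr, hmem⟩ := O.unit α (n + n) (-(blk 0 M (star M) 0))
    (by rw [star_neg, blk_star]; simp [star_star])
  rw [sub_neg_eq_add, ← diagE_blk, blk_smul, blk_add] at hmem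
  refine ⟨r, hr.le, ?_⟩
  simpa using hmem

lemma nset_up (O : LocalOpSys Γ V) {α : Γ} {n : ℕ} {M : Matrix (Fin n) (Fin n) V} {r s : ℝ}
    (hmem : blk ((r : ℂ) • diagE O.e n) M (star M) ((r : ℂ) • diagE O.e n) ∈ O.C α (n + n))
    (hrs : r ≤ s) :
    blk ((s : ℂ) • diagE O.e n) M (star M) ((s : ℂ) • diagE O.e n) ∈ O.C α (n + n) := by
  have hd : ((s - r : ℝ) : ℂ) • diagE O.e (n + n) ∈ O.C α (n + n) :=
    (O.cone α (n + n)).2.2 (s - r) (by linarith) _ (eInC O α (n + n))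
  rw [← diagE_blk, blk_smul] at hd
  have h3 := (O.cone α (n + n)).2.1 _ hmem _ hd
  rw [blk_add] at h3
  have he : (r : ℂ) • diagE O.e n + ((s - r : ℝ) : ℂ) • diagE O.e n
      = (s : ℂ) • diagE O.e n := by
    rw [← add_smul]
    norm_num
  rw [he] at h3
  simpa using h3

lemma memGt (O : LocalOpSys Γ V) {α : Γ} {n : ℕ} {M : Matrix (Fin n) (Fin n) V} {c t : ℝ}
    (h : nrm O.C O.e α n M ≤ c) (hct : c < t) :
    blk ((t : ℂ) • diagE O.e n) M (star M) ((t : ℂ) • diagE O.e n) ∈ O.C α (n + n) := by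
  set s : Set ℝ := {r : ℝ | 0 ≤ r ∧
    blk ((r : ℂ) • diagE O.e n) M (star M) ((r : ℂ) • diagE O.e n) ∈ O.C α (n + n)} with hsdef
  have hne : s.Nonempty := by
    obtain ⟨r, hr⟩ := nset_nonempty O α n M
    exact ⟨r, hr⟩
  have hbdd : BddBelow s := ⟨0, fun x hx => hx.1⟩
  have hlt : sInf s < t := lt_of_le_of_lt h hct
  obtain ⟨r, hrmem, hrt⟩ := (csInf_lt_iff hbdd hne).mp hlt
  exact nset_up O hrmem.2 hrt.le

lemma nrm_le (O : LocalOpSys Γ V) {α : Γ} {n : ℕ} {M : Matrix (Fin n) (Fin n) V} {c : ℝ}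
    (hc : 0 ≤ c)
    (h : ∀ t, c < t →
      blk ((t : ℂ) • diagE O.e n) M (star M) ((t : ℂ) • diagE O.e n) ∈ O.C α (n + n)) :
    nrm O.C O.e α n M ≤ c := by
  by_contra hlt
  push_neg at hlt
  set m := nrm O.C O.e α n M with hm
  set t := (c + m) / 2 with ht
  have hct : c < t := by simp only [ht]; linarith
  have htm : t < m := by simp only [ht]; linarith
  have hmem : t ∈ {r : ℝ | 0 ≤ r ∧
      blk ((r : ℂ) • diagE O.e n) M (star M) ((r : ℂ) • diagE O.e n) ∈ O.C α (n + n)} :=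
    ⟨le_trans hc hct.le, h t hct⟩
  have := csInf_le ⟨0, fun x hx => hx.1⟩ hmem
  exact absurd (lt_of_le_of_lt this htm) (lt_irrefl _)

lemma nrm_nonneg (O : LocalOpSys Γ V) (α : Γ) (n : ℕ) (M : Matrix (Fin n) (Fin n) V) :
    0 ≤ nrm O.C O.e α n M := by
  obtain ⟨r, hr⟩ := nset_nonempty O α n M
  exact le_csInf ⟨r, hr⟩ fun x hx => hx.1

end Aux2

section Aux3

variable {V : Type} [AddCommGroup V] [Module ℂ V] [StarAddMonoid V] [StarModule ℂ V] {Γ : Type}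

lemma cone_sum {M : Type} [AddCommGroup M] [Module ℂ M] {C : Set M} (hC : IsVCone C)
    {ι : Type} (s : Finset ι) (f : ι → M) (h : ∀ i ∈ s, f i ∈ C) : ∑ i ∈ s, f i ∈ C := by
  classical
  induction s using Finset.induction_on with
  | empty => simpa using hC.1
  | insert _ _ hx ih =>
    rw [Finset.sum_insert hx]
    exact hC.2.1 _ (h _ (Finset.mem_insert_self _ _)) _
      (ih fun i hi => h i (Finset.mem_insert_of_mem hi))

lemma one_mem_nset (O : LocalOpSys Γ V) (α : Γ) :
    blk (((1 : ℝ) : ℂ) • diagE O.e 1) (diagE O.e 1) (star (diagE O.e 1))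
      (((1 : ℝ) : ℂ) • diagE O.e 1) ∈ O.C α (1 + 1) := by
  rw [star_diagE O.eherm]
  have h := O.compat α 1 (1 + 1) (Matrix.of fun _ _ => (1 : ℂ)) (diagE O.e 1) (eInC O α 1)
  have hs : blk (((1 : ℝ) : ℂ) • diagE O.e 1) (diagE O.e 1) (diagE O.e 1)
      (((1 : ℝ) : ℂ) • diagE O.e 1) = sconj (Matrix.of fun _ _ => (1 : ℂ)) (diagE O.e 1) := by
    ext i j
    obtain ⟨x, rfl⟩ := finSumFinEquiv.surjective i
    obtain ⟨y, rfl⟩ := finSumFinEquiv.surjective j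
    rcases x with a | a <;> rcases y with b | b <;> rw [blk_apply'] <;>
      simp [sconj, Matrix.fromBlocks, diagE, Matrix.diagonal_apply,
        Fin.eq_zero a, Fin.eq_zero b]
  rw [hs]
  exact h

lemma corner_mem (O : LocalOpSys Γ V) {α : Γ} {t : ℝ} {v : V} (hv : star v = v)
    (h : blk ((t : ℂ) • diagE O.e 1) (Matrix.of fun _ _ => v)
      (star (Matrix.of fun _ _ => v)) ((t : ℂ) • diagE O.e 1) ∈ O.C α (1 + 1)) :
    (Matrix.of fun (_ _ : Fin 1) => (t : ℂ) • O.e - v) ∈ O.C α 1 := by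
  set Xc : Matrix (Fin (1 + 1)) (Fin 1) ℂ :=
    Matrix.of fun i _ => Sum.elim (fun _ => (1 : ℂ)) (fun _ => (-1 : ℂ))
      (finSumFinEquiv.symm i) with hXc
  have h2 := O.compat α (1 + 1) 1 Xc _ h
  have key : sconj Xc (blk ((t : ℂ) • diagE O.e 1) (Matrix.of fun _ _ => v)
      (star (Matrix.of fun _ _ => v)) ((t : ℂ) • diagE O.e 1)) =
      Matrix.of fun (_ _ : Fin 1) => ((2 : ℝ) : ℂ) • ((t : ℂ) • O.e - v) := by
    ext i j
    simp only [sconj, Matrix.of_apply]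
    simp only [← Equiv.sum_comp finSumFinEquiv]
    simp only [Fintype.sum_sum_type, Fin.sum_univ_one, blk_apply', hXc,
      Equiv.symm_apply_apply, Matrix.of_apply, Sum.elim_inl, Sum.elim_inr,
      Matrix.fromBlocks_apply₁₁, Matrix.fromBlocks_apply₁₂,
      Matrix.fromBlocks_apply₂₁, Matrix.fromBlocks_apply₂₂,
      Matrix.smul_apply, Matrix.star_apply, hv, diagE, Matrix.diagonal_apply_eq,
      map_one, map_neg]
    module
  rw [key] at h2
  have h3 := (O.cone α 1).2.2 (1 / 2) (by norm_num) _ h2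
  have h4 : ((1 / 2 : ℝ) : ℂ) • (Matrix.of fun (_ _ : Fin 1) => ((2 : ℝ) : ℂ) •
      ((t : ℂ) • O.e - v)) = Matrix.of fun (_ _ : Fin 1) => (t : ℂ) • O.e - v := by
    ext i j
    simp only [Matrix.smul_apply, Matrix.of_apply, smul_smul]
    norm_num
  rw [h4] at h3
  exact h3

lemma diag_mem (O : LocalOpSys Γ V) {α : Γ} {w : V}
    (h : (Matrix.of fun (_ _ : Fin 1) => w) ∈ O.C α 1) (n : ℕ) :
    Matrix.diagonal (fun _ : Fin n => w) ∈ O.C α n := by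
  have hs : Matrix.diagonal (fun _ : Fin n => w) = ∑ k : Fin n,
      sconj (Matrix.of fun (_ : Fin 1) (i : Fin n) => if i = k then (1 : ℂ) else 0)
        (Matrix.of fun _ _ => w) := by
    ext i j
    simp only [Matrix.sum_apply, sconj, Matrix.of_apply, Fin.sum_univ_one,
      apply_ite (starRingEnd ℂ), map_one, map_zero, Matrix.diagonal_apply,
      ite_mul, mul_ite, one_mul, mul_one, mul_zero, ite_smul, one_smul, zero_smul]
    by_cases hij : i = j
    · subst hij
      simp [Finset.sum_ite_eq']
    · rw [Finset.sum_eq_zero]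
      · simp [hij]
      · intro k hk
        by_cases hik : i = k <;> by_cases hjk : j = k <;> simp_all
  rw [hs]
  exact cone_sum (O.cone α n) _ _ fun k _ => O.compat α 1 n _ _ h

lemma diag_sub (t : ℝ) (e v : V) (n : ℕ) :
    Matrix.diagonal (fun _ : Fin n => (t : ℂ) • e - v) =
      (t : ℂ) • diagE e n - diagE v n := by
  ext i j
  by_cases h : i = j <;> simp [diagE, Matrix.diagonal_apply, h]

end Aux3


/-- a local completely positive map from a local operator system into a
Pro-C*-algebra is local completely bounded, and
`‖φ(1)‖_β = ‖φ‖_{(α,β)} = ‖φ‖^{lcb}_{(α,β)}`. -/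
theorem statement11 {Γ Λ Vs B : Type} [AddCommGroup Vs] [Module ℂ Vs]
    [StarAddMonoid Vs] [StarModule ℂ Vs]
    [Ring B] [Algebra ℂ B] [StarRing B] [StarModule ℂ B]
    (S : LocalOpSys Γ Vs) (T : LocalOpSys Λ B) (hTe : T.e = 1)
    (φ : Vs →ₗ[ℂ] B) (α : Γ) (β : Λ)
    (hcp : ∀ (n : ℕ) (M : Matrix (Fin n) (Fin n) Vs),
      M ∈ S.C α n → M.map ⇑φ ∈ T.C β n) :
    BddAbove {r : ℝ | ∃ (n : ℕ) (M : Matrix (Fin n) (Fin n) Vs),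
        nrm S.C S.e α n M ≤ 1 ∧ r = nrm T.C T.e β n (M.map ⇑φ)} ∧
    sSup {r : ℝ | ∃ (n : ℕ) (M : Matrix (Fin n) (Fin n) Vs),
        nrm S.C S.e α n M ≤ 1 ∧ r = nrm T.C T.e β n (M.map ⇑φ)} =
      nrm T.C T.e β 1 (Matrix.of fun _ _ => φ S.e) ∧
    sSup {r : ℝ | ∃ M : Matrix (Fin 1) (Fin 1) Vs,
        nrm S.C S.e α 1 M ≤ 1 ∧ r = nrm T.C T.e β 1 (M.map ⇑φ)} =
      nrm T.C T.e β 1 (Matrix.of fun _ _ => φ S.e) := by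
  set N : ℝ := nrm T.C T.e β 1 (Matrix.of fun _ _ => φ S.e) with hN
  -- basic facts about φ S.e
  have hmapE : (diagE S.e 1).map ⇑φ = Matrix.of fun _ _ => φ S.e := by
    rw [map_diagE]
    ext i j
    simp [diagE, Matrix.diagonal_apply, Fin.eq_zero i, Fin.eq_zero j]
  have hφe_mem : (Matrix.of fun _ _ => φ S.e) ∈ T.C β 1 := by
    rw [← hmapE]; exact hcp 1 _ (eInC S α 1)
  have hstarφe : star (φ S.e) = φ S.e := by
    have h := congrFun (congrFun (T.herm β 1 _ hφe_mem) 0) 0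
    simpa [Matrix.star_apply] using h
  have hNnonneg : 0 ≤ N := nrm_nonneg T β 1 _
  -- key estimate
  have key : ∀ (n : ℕ) (M : Matrix (Fin n) (Fin n) Vs),
      nrm S.C S.e α n M ≤ 1 → nrm T.C T.e β n (M.map ⇑φ) ≤ N := by
    intro n M hM
    apply nrm_le T hNnonneg
    intro u hu
    set t : ℝ := (N + u) / 2 with ht
    have htN : N < t := by rw [ht]; linarith
    have htu : t < u := by rw [ht]; linarith
    have ht0 : 0 < t := lt_of_le_of_lt hNnonneg htN
    set s : ℝ := u / t with hs
    have hs1 : 1 < s := (one_lt_div ht0).mpr htu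
    have hst : s * t = u := div_mul_cancel₀ u (ne_of_gt ht0)
    -- source membership at level n+n and its image
    have h1 := memGt S hM hs1
    have h2 := hcp (n + n) _ h1
    rw [blk_map] at h2
    have hsm : ((s : ℂ) • diagE S.e n).map ⇑φ = (s : ℂ) • diagE (φ S.e) n := by
      have h' : ((s : ℂ) • diagE S.e n).map ⇑φ = (s : ℂ) • (diagE S.e n).map ⇑φ := by
        ext i j
        simp [Matrix.map_apply, Matrix.smul_apply, map_smul]
      rw [h', map_diagE]
    rw [hsm] at h2
    -- hermiticity of the image gives star compatibility
    have hh := T.herm β (n + n) _ h2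
    rw [blk_star] at hh
    have hbM : (star M).map ⇑φ = star (M.map ⇑φ) := by
      have h12 := blk_inj₁₂ hh
      calc (star M).map ⇑φ = star (star ((star M).map ⇑φ)) := (star_star _).symm
        _ = star (M.map ⇑φ) := by rw [h12]
    rw [hbM] at h2
    -- the diagonal correction term
    have hφblk := memGt T (le_refl N) htN
    have hc := corner_mem T hstarφe hφblk
    have hdg := diag_mem T hc n
    rw [diag_sub] at hdg
    have hsc := (T.cone β n).2.2 s (by linarith) _ hdg
    have hblkD := blkdiag_mem T hsc
    have hsum := (T.cone β (n + n)).2.1 _ h2 _ hblkD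
    rw [blk_add] at hsum
    have hc2 : (s : ℂ) * (t : ℂ) = (u : ℂ) := by rw [← Complex.ofReal_mul, hst]
    have heq : (s : ℂ) • diagE (φ S.e) n +
        (s : ℂ) • ((t : ℂ) • diagE T.e n - diagE (φ S.e) n) = (u : ℂ) • diagE T.e n := by
      rw [smul_sub, smul_smul, hc2]
      abel
    rw [heq] at hsum
    simpa using hsum
  -- the witness
  have hw1 : nrm S.C S.e α 1 (diagE S.e 1) ≤ 1 := by
    apply csInf_le ⟨0, fun x hx => hx.1⟩
    exact ⟨zero_le_one, one_mem_nset S α⟩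
  have hwitBig : N ∈ {r : ℝ | ∃ (n : ℕ) (M : Matrix (Fin n) (Fin n) Vs),
      nrm S.C S.e α n M ≤ 1 ∧ r = nrm T.C T.e β n (M.map ⇑φ)} :=
    ⟨1, diagE S.e 1, hw1, by rw [hmapE]⟩
  have hwitSmall : N ∈ {r : ℝ | ∃ M : Matrix (Fin 1) (Fin 1) Vs,
      nrm S.C S.e α 1 M ≤ 1 ∧ r = nrm T.C T.e β 1 (M.map ⇑φ)} :=
    ⟨diagE S.e 1, hw1, by rw [hmapE]⟩
  have hboundBig : ∀ r ∈ {r : ℝ | ∃ (n : ℕ) (M : Matrix (Fin n) (Fin n) Vs),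
      nrm S.C S.e α n M ≤ 1 ∧ r = nrm T.C T.e β n (M.map ⇑φ)}, r ≤ N := by
    rintro r ⟨n, M, hM, rfl⟩
    exact key n M hM
  have hboundSmall : ∀ r ∈ {r : ℝ | ∃ M : Matrix (Fin 1) (Fin 1) Vs,
      nrm S.C S.e α 1 M ≤ 1 ∧ r = nrm T.C T.e β 1 (M.map ⇑φ)}, r ≤ N := by
    rintro r ⟨M, hM, rfl⟩
    exact key 1 M hM
  have hbddBig : BddAbove {r : ℝ | ∃ (n : ℕ) (M : Matrix (Fin n) (Fin n) Vs),
      nrm S.C S.e α n M ≤ 1 ∧ r = nrm T.C T.e β n (M.map ⇑φ)} := ⟨N, hboundBig⟩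
  have hbddSmall : BddAbove {r : ℝ | ∃ M : Matrix (Fin 1) (Fin 1) Vs,
      nrm S.C S.e α 1 M ≤ 1 ∧ r = nrm T.C T.e β 1 (M.map ⇑φ)} := ⟨N, hboundSmall⟩
  refine ⟨hbddBig, ?_, ?_⟩
  · exact le_antisymm (csSup_le ⟨N, hwitBig⟩ hboundBig) (le_csSup hbddBig hwitBig)
  · exact le_antisymm (csSup_le ⟨N, hwitSmall⟩ hboundSmall) (le_csSup hbddSmall hwitSmall)
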